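/- In the primal averaging conditional gradient method with the explicit stepsize α_k = γ_k := 2/(k+1) (i.e., z_{k−1} := ((k−1)/(k+1)) y_{k−1} + (2/(k+1)) x_{k−1}, x_k ∈ argmin_{x∈X} f'(z_{k−1})(x), and y_k := (1−γ_k) y_{k−1} + γ_k x_k, starting from x₀ = y₀ ∈ X), the consecutive averaged points satisfy ‖z_k − z_{k−1}‖ ≤ 3 γ_k D_X for all k ≥ 1, and consequently the consecutive oracle inputs p_k := f'(z_{k−1}) satisfy ‖p_k − p_{k−1}‖_* = ‖f'(z_{k−1}) − f'(z_{k−2})‖_* ≤ 3 γ_{k−1} L D_X for all k ≥ 2. -/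

import Mathlib

/-- In the PA-CndG method with stepsize `α_k = γ_k = 2/(k+1)`, the averaged
points satisfy `‖z_k − z_{k−1}‖ ≤ 3 γ_k D_X` for all `k ≥ 1`, and hence the oracle inputs
`p_k = f'(z_{k−1})` satisfy `‖f'(z_{k−1}) − f'(z_{k−2})‖_* ≤ 3 γ_{k−1} L D_X` for `k ≥ 2`,
provided `f'` is `L`-Lipschitz on `X` (in dual norm). -/
theorem stmt15 {E : Type*} [NormedAddCommGroup E] [NormedSpace ℝ E] [FiniteDimensional ℝ E]
    (X : Set E) (hXcp : IsCompact X) (hXcv : Convex ℝ X) (hXne : X.Nonempty)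
    (DX : ℝ) (hDX : IsGreatest {d : ℝ | ∃ a ∈ X, ∃ b ∈ X, d = ‖a - b‖} DX)
    (f : E → ℝ) (f' : E → E →L[ℝ] ℝ) (L : ℝ) (hL : 0 < L)
    (hconv : ConvexOn ℝ X f)
    (hder : ∀ a ∈ X, HasFDerivAt f (f' a) a)
    (hlip : ∀ a ∈ X, ∀ b ∈ X, ‖f' a - f' b‖ ≤ L * ‖a - b‖)
    (x y z : ℕ → E) (γ : ℕ → ℝ) (hγ : ∀ k : ℕ, γ k = 2 / (k + 1))
    (hx0 : x 0 ∈ X) (hy0 : y 0 = x 0)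
    (hz : ∀ k ≥ 1, z (k - 1) =
      (((k : ℝ) - 1) / ((k : ℝ) + 1)) • y (k - 1) + (2 / ((k : ℝ) + 1)) • x (k - 1))
    (hxk : ∀ k ≥ 1, x k ∈ X ∧ ∀ v ∈ X, f' (z (k - 1)) (x k) ≤ f' (z (k - 1)) v)
    (hyk : ∀ k ≥ 1, y k = (1 - γ k) • y (k - 1) + γ k • x k) :
    (∀ k ≥ 1, ‖z k - z (k - 1)‖ ≤ 3 * γ k * DX) ∧
    (∀ k ≥ 2, ‖f' (z (k - 1)) - f' (z (k - 2))‖ ≤ 3 * γ (k - 1) * L * DX) := by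
  -- diameter facts
  have hDub : ∀ a ∈ X, ∀ b ∈ X, ‖a - b‖ ≤ DX := by
    intro a ha b hb
    exact hDX.2 ⟨a, ha, b, hb, rfl⟩
  have hD0 : 0 ≤ DX := by
    obtain ⟨a, ha, b, hb, hab⟩ := hDX.1
    rw [hab]; positivity
  -- membership of iterates
  have hmem : ∀ k : ℕ, x k ∈ X ∧ y k ∈ X := by
    intro k
    induction k with
    | zero => exact ⟨hx0, hy0 ▸ hx0⟩
    | succ n ih =>
      have hxX := (hxk (n + 1) (Nat.le_add_left 1 n)).1
      refine ⟨hxX, ?_⟩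
      have hy := hyk (n + 1) (Nat.le_add_left 1 n)
      simp only [Nat.add_sub_cancel] at hy
      rw [hy]
      have hγpos : 0 ≤ γ (n + 1) := by rw [hγ]; positivity
      have hγle : γ (n + 1) ≤ 1 := by
        rw [hγ]
        rw [div_le_one (by positivity)]
        push_cast; linarith
      exact hXcv ih.2 hxX (by linarith) hγpos (by ring)
  -- membership of z
  have hzmem : ∀ m : ℕ, z m ∈ X := by
    intro m
    have hzm := hz (m + 1) (Nat.le_add_left 1 m)
    simp only [Nat.add_sub_cancel] at hzm
    rw [hzm]
    push_cast
    have h1 : (0:ℝ) ≤ ((m:ℝ) + 1 - 1) / ((m:ℝ) + 1 + 1) := by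
      apply div_nonneg <;> [simp; positivity]
    have h2 : (0:ℝ) ≤ 2 / ((m:ℝ) + 1 + 1) := by positivity
    have h3 : ((m:ℝ) + 1 - 1) / ((m:ℝ) + 1 + 1) + 2 / ((m:ℝ) + 1 + 1) = 1 := by
      field_simp
      ring
    exact hXcv (hmem m).2 (hmem m).1 h1 h2 h3
  -- main bound
  have main : ∀ k ≥ 1, ‖z k - z (k - 1)‖ ≤ 3 * γ k * DX := by
    intro k hk
    obtain ⟨m, rfl⟩ : ∃ m, k = m + 1 := ⟨k - 1, (Nat.succ_pred_eq_of_pos hk).symm⟩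
    simp only [Nat.add_sub_cancel]
    set a : ℝ := (m : ℝ)
    have ha0 : (0:ℝ) ≤ a := Nat.cast_nonneg m
    have hzm := hz (m + 1) (Nat.le_add_left 1 m)
    have hzm1 := hz (m + 2) (by omega)
    have hym1 := hyk (m + 1) (Nat.le_add_left 1 m)
    simp only [Nat.add_sub_cancel, show m + 2 - 1 = m + 1 by omega] at hzm hzm1 hym1
    push_cast at hzm hzm1
    rw [hγ] at hym1
    push_cast at hym1
    have key : z (m + 1) - z m =
        (2 * a / ((a + 2) * (a + 3))) • (x (m + 1) - y m)
          + (2 / (a + 2)) • (x (m + 1) - x m) := by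
      rw [hzm1, hym1, hzm]
      match_scalars <;> · field_simp; ring
    rw [key]
    have hb1 : ‖(2 * a / ((a + 2) * (a + 3))) • (x (m + 1) - y m)‖
        ≤ (2 * a / ((a + 2) * (a + 3))) * DX := by
      rw [norm_smul, Real.norm_eq_abs, abs_of_nonneg (by positivity)]
      exact mul_le_mul_of_nonneg_left (hDub _ (hmem (m + 1)).1 _ (hmem m).2) (by positivity)
    have hb2 : ‖(2 / (a + 2)) • (x (m + 1) - x m)‖ ≤ (2 / (a + 2)) * DX := by
      rw [norm_smul, Real.norm_eq_abs, abs_of_nonneg (by positivity)]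
      exact mul_le_mul_of_nonneg_left (hDub _ (hmem (m + 1)).1 _ (hmem m).1) (by positivity)
    have hγval : γ (m + 1) = 2 / (a + 2) := by rw [hγ]; push_cast; ring_nf; rfl
    calc ‖(2 * a / ((a + 2) * (a + 3))) • (x (m + 1) - y m)
          + (2 / (a + 2)) • (x (m + 1) - x m)‖
        ≤ (2 * a / ((a + 2) * (a + 3))) * DX + (2 / (a + 2)) * DX :=
          le_trans (norm_add_le _ _) (add_le_add hb1 hb2)
      _ ≤ 3 * γ (m + 1) * DX := by
          rw [hγval]
          have hsum : 2 * a / ((a + 2) * (a + 3)) + 2 / (a + 2) ≤ 6 / (a + 2) := by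
            rw [div_add_div _ _ (by positivity) (by positivity),
              div_le_div_iff₀ (by positivity) (by positivity)]
            nlinarith [mul_nonneg (mul_nonneg (by linarith : (0:ℝ) ≤ a + 2)
              (by linarith : (0:ℝ) ≤ a + 2)) (by linarith : (0:ℝ) ≤ 2 * a + 12)]
          have h6 : (3:ℝ) * (2 / (a + 2)) = 6 / (a + 2) := by ring
          rw [h6, ← add_mul]
          exact mul_le_mul_of_nonneg_right hsum hD0
  refine ⟨main, ?_⟩
  intro k hk
  obtain ⟨m, rfl⟩ : ∃ m, k = m + 2 := ⟨k - 2, by omega⟩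
  simp only [show m + 2 - 1 = m + 1 by omega, show m + 2 - 2 = m by omega]
  have h1 := hlip _ (hzmem (m + 1)) _ (hzmem m)
  have h2 := main (m + 1) (Nat.le_add_left 1 m)
  simp only [Nat.add_sub_cancel] at h2
  calc ‖f' (z (m + 1)) - f' (z m)‖ ≤ L * ‖z (m + 1) - z m‖ := h1
    _ ≤ L * (3 * γ (m + 1) * DX) := mul_le_mul_of_nonneg_left h2 hL.le
    _ = 3 * γ (m + 1) * L * DX := by ring
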